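/- Let d ≥ 1, λ > 0, and let X_1, X_2, … be i.i.d. random vectors in ℝ^d whose coordinates are independent and each exponentially distributed with rate λ. Let {y_n} be a nonincreasing sequence of positive edge distances with Σ_n n·y_n^d < ∞. Let Δ_n(y_n) be the maximum vertex degree of the random geometric graph G_n(y_n). Then P[Δ_n(y_n) ≥ 1 infinitely often] = 0; that is, almost surely G_n(y_n) has no edges for all sufficiently large n. -/

import Mathlib

open MeasureTheory ProbabilityTheory Real Filter

/-- The degree of the vertex `X i` in the random geometric graph `G_n(y)` on vertices
`X 0, …, X (n-1)` (with the `l_∞` norm on `Fin d → ℝ`, which is the sup norm of the pi type). -/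
noncomputable def rggDeg {d : ℕ} {Ω : Type*} (X : ℕ → Ω → (Fin d → ℝ))
    (y : ℝ) (n i : ℕ) (ω : Ω) : ℕ :=
  Nat.card {j : ℕ // j < n ∧ j ≠ i ∧ ‖X i ω - X j ω‖ ≤ y}

/-- The minimum vertex degree `δ_n(y)` of the random geometric graph `G_n(y)`. -/
noncomputable def rggMinDeg {d : ℕ} {Ω : Type*} (X : ℕ → Ω → (Fin d → ℝ))
    (y : ℝ) (n : ℕ) (ω : Ω) : ℕ :=
  sInf ((fun i => rggDeg X y n i ω) '' Set.Iio n)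

/-- The maximum vertex degree `Δ_n(y)` of the random geometric graph `G_n(y)`. -/
noncomputable def rggMaxDeg {d : ℕ} {Ω : Type*} (X : ℕ → Ω → (Fin d → ℝ))
    (y : ℝ) (n : ℕ) (ω : Ω) : ℕ :=
  sSup ((fun i => rggDeg X y n i ω) '' Set.Iio n)

/-- The number of edges `ε_n(y)` of the random geometric graph `G_n(y)`. -/
noncomputable def rggEdgeCount {d : ℕ} {Ω : Type*} (X : ℕ → Ω → (Fin d → ℝ))
    (y : ℝ) (n : ℕ) (ω : Ω) : ℕ :=
  Nat.card {p : ℕ × ℕ // p.1 < p.2 ∧ p.2 < n ∧ ‖X p.1 ω - X p.2 ω‖ ≤ y}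



private lemma expMeasure_Icc_le (l : ℝ) (hl : 0 < l) (u v : ℝ) :
    expMeasure l (Set.Icc u v) ≤ ENNReal.ofReal (l * (v - u)) := by
  by_cases huv : u ≤ v
  · rw [expMeasure, gammaMeasure, withDensity_apply _ measurableSet_Icc]
    calc ∫⁻ x in Set.Icc u v, gammaPDF 1 l x
        ≤ ∫⁻ _ in Set.Icc u v, ENNReal.ofReal l := by
          refine lintegral_mono fun x => ?_
          have hre : gammaPDF 1 l x = exponentialPDF l x := rfl
          rw [hre, exponentialPDF_eq]
          refine ENNReal.ofReal_le_ofReal ?_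
          split_ifs with hx
          · have h1 : rexp (-(l * x)) ≤ 1 := Real.exp_le_one_iff.mpr (by nlinarith)
            nlinarith
          · exact hl.le
      _ = ENNReal.ofReal l * volume (Set.Icc u v) := setLIntegral_const _ _
      _ = ENNReal.ofReal (l * (v - u)) := by
          rw [Real.volume_Icc, ← ENNReal.ofReal_mul hl.le]
  · rw [Set.Icc_eq_empty huv]
    simp

private lemma pair_prob_bound {d : ℕ} {Ω : Type*} [MeasureSpace Ω] [IsProbabilityMeasure (ℙ : Measure Ω)]
    (l : ℝ) (hl : 0 < l)
    (X : ℕ → Ω → (Fin d → ℝ)) (hXm : ∀ i, Measurable (X i))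
    (hindep : iIndepFun X ℙ)
    (hdist : ∀ i, Measure.map (X i) ℙ = Measure.pi fun _ : Fin d => expMeasure l)
    {i j : ℕ} (hij : i ≠ j) {y : ℝ} (hy : 0 ≤ y) :
    ℙ {ω | ‖X i ω - X j ω‖ ≤ y} ≤ ENNReal.ofReal ((2 * l * y) ^ d) := by
  haveI : IsProbabilityMeasure (expMeasure l) := isProbabilityMeasure_expMeasure hl
  set μ : Measure (Fin d → ℝ) := Measure.pi fun _ : Fin d => expMeasure l with hμ
  haveI : IsProbabilityMeasure μ := hdist i ▸ Measure.isProbabilityMeasure_map (hXm i).aemeasurable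
  have hpair : Measurable fun ω => (X i ω, X j ω) := (hXm i).prodMk (hXm j)
  have hS : MeasurableSet {p : (Fin d → ℝ) × (Fin d → ℝ) | ‖p.1 - p.2‖ ≤ y} :=
    measurableSet_le (measurable_fst.sub measurable_snd).norm measurable_const
  have hmap : Measure.map (fun ω => (X i ω, X j ω)) ℙ = μ.prod μ := by
    rw [(indepFun_iff_map_prod_eq_prod_map_map (hXm i).aemeasurable (hXm j).aemeasurable).mp
      (hindep.indepFun hij), hdist i, hdist j]
  have heq : ℙ {ω | ‖X i ω - X j ω‖ ≤ y}
      = (μ.prod μ) {p | ‖p.1 - p.2‖ ≤ y} := by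
    rw [← hmap, Measure.map_apply hpair hS]
    rfl
  rw [heq, Measure.prod_apply hS]
  have hsec : ∀ a : Fin d → ℝ,
      μ (Prod.mk a ⁻¹' {p : (Fin d → ℝ) × (Fin d → ℝ) | ‖p.1 - p.2‖ ≤ y})
      ≤ ENNReal.ofReal ((2 * l * y) ^ d) := by
    intro a
    have hset : Prod.mk a ⁻¹' {p : (Fin d → ℝ) × (Fin d → ℝ) | ‖p.1 - p.2‖ ≤ y}
        = Set.pi Set.univ fun k => Set.Icc (a k - y) (a k + y) := by
      ext b
      simp only [Set.mem_preimage, Set.mem_setOf_eq, Set.mem_pi, Set.mem_univ, true_implies,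
        Set.mem_Icc]
      rw [pi_norm_le_iff_of_nonneg hy]
      constructor
      · intro h k
        have hk := h k
        rw [Pi.sub_apply, Real.norm_eq_abs, abs_le] at hk
        constructor <;> linarith [hk.1, hk.2]
      · intro h k
        rw [Pi.sub_apply, Real.norm_eq_abs, abs_le]
        constructor <;> linarith [(h k).1, (h k).2]
    rw [hset, hμ, Measure.pi_pi]
    calc ∏ k : Fin d, expMeasure l (Set.Icc (a k - y) (a k + y))
        ≤ ∏ _k : Fin d, ENNReal.ofReal (2 * l * y) := by
          refine Finset.prod_le_prod' fun k _ => ?_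
          have h1 := expMeasure_Icc_le l hl (a k - y) (a k + y)
          have h2 : l * (a k + y - (a k - y)) = 2 * l * y := by ring
          rwa [h2] at h1
      _ = ENNReal.ofReal (2 * l * y) ^ d := by
          rw [Finset.prod_const, Finset.card_univ, Fintype.card_fin]
      _ = ENNReal.ofReal ((2 * l * y) ^ d) := (ENNReal.ofReal_pow (by positivity) d).symm
  calc ∫⁻ a, μ (Prod.mk a ⁻¹' {p : (Fin d → ℝ) × (Fin d → ℝ) | ‖p.1 - p.2‖ ≤ y}) ∂μ
      ≤ ∫⁻ _, ENNReal.ofReal ((2 * l * y) ^ d) ∂μ := lintegral_mono hsec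
    _ = ENNReal.ofReal ((2 * l * y) ^ d) := by simp

private lemma summable_four_pow {d : ℕ} (y : ℕ → ℝ) (hy : ∀ n, 0 < y n) (hmono : Antitone y)
    (hsum : Summable fun n : ℕ => (n : ℝ) * y n ^ d) :
    Summable fun k : ℕ => (4 : ℝ) ^ k * y (2 ^ k) ^ d := by
  set a : ℕ → ℝ := fun n => (n : ℝ) * y n ^ d with ha
  have hanneg : ∀ n, 0 ≤ a n := fun n => mul_nonneg n.cast_nonneg (pow_nonneg (hy n).le d)
  set c : ℕ → ℝ := fun k => (4 : ℝ) ^ k * y (2 ^ k) ^ d with hc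
  have hcnonneg : ∀ k, 0 ≤ c k := fun k => mul_nonneg (by positivity) (pow_nonneg (hy _).le d)
  have key : ∀ K : ℕ, ∑ k ∈ Finset.range (K + 1), c k
      ≤ c 0 + 4 * ∑ n ∈ Finset.Ico 1 (2 ^ K), a n := by
    intro K
    induction K with
    | zero => simp
    | succ K ih =>
      rw [Finset.sum_range_succ]
      have hblock : c (K + 1) ≤ 4 * ∑ n ∈ Finset.Ico (2 ^ K) (2 ^ (K + 1)), a n := by
        have hlb : ∀ n ∈ Finset.Ico (2 ^ K) (2 ^ (K + 1)),
            (2 ^ K : ℝ) * y (2 ^ (K + 1)) ^ d ≤ a n := by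
          intro n hn
          rw [Finset.mem_Ico] at hn
          have h1 : (2 ^ K : ℝ) ≤ (n : ℝ) := by exact_mod_cast hn.1
          have h2 : y (2 ^ (K + 1)) ^ d ≤ y n ^ d :=
            pow_le_pow_left₀ (hy _).le (hmono hn.2.le) d
          have h3 : (0:ℝ) ≤ y (2 ^ (K+1)) ^ d := pow_nonneg (hy _).le d
          have h4 : (0:ℝ) ≤ (n:ℝ) := n.cast_nonneg
          show (2 ^ K : ℝ) * y (2 ^ (K + 1)) ^ d ≤ (n : ℝ) * y n ^ d
          exact mul_le_mul h1 h2 h3 h4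
        have hcard := Finset.card_nsmul_le_sum _ _ _ hlb
        rw [Nat.card_Ico, nsmul_eq_mul] at hcard
        have hcount : ((2 ^ (K + 1) - 2 ^ K : ℕ) : ℝ) = 2 ^ K := by
          have : 2 ^ (K + 1) - 2 ^ K = 2 ^ K := by
            rw [pow_succ]; omega
          rw [this]; push_cast; ring
        rw [hcount] at hcard
        have h44 : (4:ℝ) ^ (K+1) = 4 * ((2:ℝ) ^ K * 2 ^ K) := by
          rw [← mul_pow]; norm_num [pow_succ]; ring
        calc c (K + 1) = 4 * ((2:ℝ) ^ K * 2 ^ K) * y (2 ^ (K+1)) ^ d := by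
              rw [hc]; dsimp only; rw [h44]
          _ ≤ 4 * ∑ n ∈ Finset.Ico (2 ^ K) (2 ^ (K + 1)), a n := by nlinarith [hcard]
      have hjoin : ∑ n ∈ Finset.Ico 1 (2 ^ K), a n
            + ∑ n ∈ Finset.Ico (2 ^ K) (2 ^ (K + 1)), a n
          = ∑ n ∈ Finset.Ico 1 (2 ^ (K + 1)), a n :=
        Finset.sum_Ico_consecutive _ (Nat.one_le_two_pow) (Nat.pow_le_pow_right (by norm_num) K.le_succ)
      linarith
  refine summable_of_sum_range_le hcnonneg (c := c 0 + 4 * ∑' n, a n) ?_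
  intro K
  have htsum_nonneg : 0 ≤ ∑' n, a n := tsum_nonneg hanneg
  match K with
  | 0 =>
    simp only [Finset.sum_range_zero]
    have h0 := hcnonneg 0
    linarith
  | K + 1 =>
    refine (key K).trans ?_
    have : ∑ n ∈ Finset.Ico 1 (2 ^ K), a n ≤ ∑' n, a n := by
      refine hsum.sum_le_tsum _ (fun n _ => hanneg n)
    linarith

lemma exists_edge {d : ℕ} {Ω : Type*} (X : ℕ → Ω → (Fin d → ℝ)) {z : ℝ} {n : ℕ} {ω : Ω}
    (h : 1 ≤ rggMaxDeg X z n ω) :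
    ∃ i < n, ∃ j < n, i ≠ j ∧ ‖X i ω - X j ω‖ ≤ z := by
  have hne : ((fun i => rggDeg X z n i ω) '' Set.Iio n).Nonempty := by
    by_contra hc
    rw [Set.not_nonempty_iff_eq_empty] at hc
    rw [rggMaxDeg, hc, csSup_empty] at h
    simp at h
  have hbdd : BddAbove ((fun i => rggDeg X z n i ω) '' Set.Iio n) :=
    ((Set.finite_Iio n).image _).bddAbove
  have hmem := Nat.sSup_mem hne hbdd
  obtain ⟨i, hi, hieq⟩ := hmem
  have hdeg : 1 ≤ rggDeg X z n i ω := by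
    rw [rggMaxDeg, ← hieq] at h
    simpa using h
  rw [rggDeg] at hdeg
  have hpos : 0 < Nat.card {j : ℕ // j < n ∧ j ≠ i ∧ ‖X i ω - X j ω‖ ≤ z} := hdeg
  obtain ⟨⟨j, hj1, hj2, hj3⟩⟩ := Nat.card_pos_iff.mp hpos |>.1
  exact ⟨i, hi, j, hj1, hj2.symm, hj3⟩

/-- If `{y_n}` is nonincreasing and `Σ_n n·y_n^d < ∞`, then `P[Δ_n(y_n) ≥ 1 i.o.] = 0`:
almost surely the graphs `G_n(y_n)` eventually have no edges. -/
theorem max_degree_io_zero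
    {d : ℕ} (hd : 1 ≤ d) (l : ℝ) (hl : 0 < l)
    {Ω : Type*} [MeasureSpace Ω] [IsProbabilityMeasure (ℙ : Measure Ω)]
    (X : ℕ → Ω → (Fin d → ℝ)) (hXm : ∀ i, Measurable (X i))
    (hindep : iIndepFun X ℙ)
    (hdist : ∀ i, Measure.map (X i) ℙ = Measure.pi fun _ : Fin d => expMeasure l)
    (y : ℕ → ℝ) (hy : ∀ n, 0 < y n) (hmono : Antitone y)
    (hsum : Summable (fun n : ℕ => (n : ℝ) * y n ^ d)) :
    ℙ {ω | ∀ N : ℕ, ∃ n ≥ N, 1 ≤ rggMaxDeg X (y n) n ω} = 0 := by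
  classical
  set A : ℕ → Set Ω := fun k => ⋃ i ∈ Finset.range (2 ^ (k + 1)),
      ⋃ j ∈ Finset.range (2 ^ (k + 1)),
      {ω | i ≠ j ∧ ‖X i ω - X j ω‖ ≤ y (2 ^ k)} with hA
  set g : ℕ → ℝ := fun k => (2 ^ (k + 1) : ℝ) * (2 ^ (k + 1) : ℝ) * (2 * l * y (2 ^ k)) ^ d
    with hg
  have hgnonneg : ∀ k, 0 ≤ g k := fun k => by
    have := (hy (2 ^ k)).le
    positivity
  -- measure bound for each A k
  have hbound : ∀ k, ℙ (A k) ≤ ENNReal.ofReal (g k) := by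
    intro k
    have step1 : ℙ (A k) ≤ ∑ i ∈ Finset.range (2 ^ (k + 1)), ∑ j ∈ Finset.range (2 ^ (k + 1)),
        ℙ {ω | i ≠ j ∧ ‖X i ω - X j ω‖ ≤ y (2 ^ k)} := by
      refine (measure_biUnion_finset_le _ _).trans ?_
      exact Finset.sum_le_sum fun i _ => measure_biUnion_finset_le _ _
    have step2 : ∀ i j : ℕ, ℙ {ω | i ≠ j ∧ ‖X i ω - X j ω‖ ≤ y (2 ^ k)}
        ≤ ENNReal.ofReal ((2 * l * y (2 ^ k)) ^ d) := by
      intro i j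
      by_cases hij : i = j
      · have : {ω : Ω | i ≠ j ∧ ‖X i ω - X j ω‖ ≤ y (2 ^ k)} = ∅ := by
          ext ω; simp [hij]
        rw [this]
        simp
      · refine le_trans (measure_mono fun ω hω => hω.2) ?_
        exact pair_prob_bound l hl X hXm hindep hdist hij (hy _).le
    refine step1.trans ?_
    calc ∑ i ∈ Finset.range (2 ^ (k + 1)), ∑ j ∈ Finset.range (2 ^ (k + 1)),
          ℙ {ω | i ≠ j ∧ ‖X i ω - X j ω‖ ≤ y (2 ^ k)}
        ≤ ∑ _i ∈ Finset.range (2 ^ (k + 1)), ∑ _j ∈ Finset.range (2 ^ (k + 1)),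
          ENNReal.ofReal ((2 * l * y (2 ^ k)) ^ d) :=
          Finset.sum_le_sum fun i _ => Finset.sum_le_sum fun j _ => step2 i j
      _ = ENNReal.ofReal (g k) := by
          rw [Finset.sum_const, Finset.sum_const, Finset.card_range, nsmul_eq_mul, nsmul_eq_mul,
            hg]
          have hz : (0:ℝ) ≤ (2 * l * y (2 ^ k)) ^ d := by
            have := (hy (2 ^ k)).le; positivity
          rw [← ENNReal.ofReal_natCast (2 ^ (k + 1)), ← ENNReal.ofReal_mul (by positivity),
            ← ENNReal.ofReal_mul (by positivity)]
          congr 1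
          push_cast
          ring
  -- summability
  have hsummable : Summable g := by
    have h4 := summable_four_pow (d := d) y hy hmono hsum
    have h4' : Summable fun k : ℕ => (4 * (2 * l) ^ d) * ((4 : ℝ) ^ k * y (2 ^ k) ^ d) :=
      h4.mul_left _
    refine h4'.congr fun k => ?_
    rw [hg]
    have h2 : (2:ℝ) ^ (k + 1) * 2 ^ (k + 1) = 4 * 4 ^ k := by
      rw [← mul_pow]
      norm_num [pow_succ]
      ring
    dsimp only
    rw [mul_pow (2 * l), h2]
    ring
  have hfin : (∑' k, ℙ (A k)) ≠ ⊤ := by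
    refine ne_top_of_le_ne_top ?_ (ENNReal.tsum_le_tsum hbound)
    rw [← ENNReal.ofReal_tsum_of_nonneg hgnonneg hsummable]
    exact ENNReal.ofReal_ne_top
  -- inclusion into limsup
  have hsub : {ω | ∀ N : ℕ, ∃ n ≥ N, 1 ≤ rggMaxDeg X (y n) n ω}
      ⊆ {ω | ∃ᶠ k in atTop, ω ∈ A k} := by
    intro ω hω
    rw [Set.mem_setOf_eq, frequently_atTop]
    intro K
    obtain ⟨n, hn, hdeg⟩ := hω (2 ^ K)
    obtain ⟨i, hi, j, hj, hij, hnorm⟩ := exists_edge X hdeg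
    have hn0 : n ≠ 0 := by omega
    set k := Nat.log 2 n with hk
    have h1 : 2 ^ k ≤ n := Nat.pow_log_le_self 2 hn0
    have h2 : n < 2 ^ (k + 1) := Nat.lt_pow_succ_log_self (by norm_num) n
    have hkK : K ≤ k := (Nat.le_log_iff_pow_le (by norm_num) hn0).mpr hn
    refine ⟨k, hkK, ?_⟩
    rw [hA]
    refine Set.mem_iUnion₂.mpr ⟨i, Finset.mem_range.mpr (by omega), ?_⟩
    refine Set.mem_iUnion₂.mpr ⟨j, Finset.mem_range.mpr (by omega), ?_⟩
    exact ⟨hij, hnorm.trans (hmono h1)⟩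
  refine le_antisymm ?_ zero_le
  calc ℙ {ω | ∀ N : ℕ, ∃ n ≥ N, 1 ≤ rggMaxDeg X (y n) n ω}
      ≤ ℙ {ω | ∃ᶠ k in atTop, ω ∈ A k} := measure_mono hsub
    _ = 0 := measure_setOf_frequently_eq_zero hfin
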